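/- The proportion of monotone Boolean functions on n variables that are evasive tends to 1 as n → ∞; that is, the number of evasive monotone functions f : {0,1}^n → {0,1} divided by the total number of monotone functions f : {0,1}^n → {0,1} tends to 1. -/

import Mathlib

open scoped Classical

/-- Binary decision trees querying coordinates in `Fin n`. -/
inductive DTree (n : ℕ) : Type where
  | leaf : Bool → DTree n
  | node : Fin n → DTree n → DTree n → DTree n

/-- Evaluation of a decision tree on an input. -/
def DTree.eval {n : ℕ} : DTree n → (Fin n → Bool) → Bool
  | .leaf b, _ => b
  | .node i t0 t1, x => if x i then DTree.eval t1 x else DTree.eval t0 x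

/-- The depth of a decision tree. -/
def DTree.depth {n : ℕ} : DTree n → ℕ
  | .leaf _ => 0
  | .node _ t0 t1 => 1 + max (DTree.depth t0) (DTree.depth t1)

/-- A Boolean function on `n` variables is evasive if its decision tree
complexity is `n`, i.e. every decision tree computing it has depth at least
`n`. -/
def Evasive {n : ℕ} (f : (Fin n → Bool) → Bool) : Prop :=
  ∀ T : DTree n, (∀ x, T.eval x = f x) → n ≤ T.depth

lemma central_sq (j : ℕ) : (2*j+1) * (Nat.centralBinom j)^2 ≤ 16^j := by
  induction j with
  | zero => simp [Nat.centralBinom]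
  | succ j ih =>
    have h := Nat.succ_mul_centralBinom_succ j
    have key : (2*(j+1)+1) * (Nat.centralBinom (j+1))^2 * (j+1)^2 ≤ 16^(j+1) * (j+1)^2 := by
      have e1 : (Nat.centralBinom (j+1))^2 * (j+1)^2 = ((j+1) * Nat.centralBinom (j+1))^2 := by ring
      calc (2*(j+1)+1) * (Nat.centralBinom (j+1))^2 * (j+1)^2
          = (2*(j+1)+1) * (((j+1) * Nat.centralBinom (j+1))^2) := by rw [mul_assoc, e1]
        _ = (2*(j+1)+1) * ((2 * (2*j+1) * Nat.centralBinom j)^2) := by rw [h]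
        _ = (4 * ((2*(j+1)+1) * (2*j+1))) * ((2*j+1) * (Nat.centralBinom j)^2) := by ring
        _ ≤ (4 * ((2*(j+1)+1) * (2*j+1))) * 16^j := Nat.mul_le_mul_left _ ih
        _ ≤ (16 * (j+1)^2) * 16^j := by
            apply Nat.mul_le_mul_right; nlinarith
        _ = 16^(j+1) * (j+1)^2 := by ring
    exact Nat.le_of_mul_le_mul_right key (by positivity)

lemma choose_sq_le (k t : ℕ) : (k+1) * (Nat.choose k t)^2 ≤ 4^k := by
  have hm : Nat.choose k t ≤ Nat.choose k (k/2) := Nat.choose_le_middle t k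
  have base : (k+1) * (Nat.choose k (k/2))^2 ≤ 4^k := by
    rcases Nat.even_or_odd k with ⟨j, hj⟩ | ⟨j, hj⟩
    · subst hj
      have h2 : (j + j)/2 = j := by omega
      rw [h2]
      have hc : Nat.choose (j+j) j = Nat.centralBinom j := by
        rw [Nat.centralBinom]; congr 1; omega
      rw [hc]
      rw [show j+j+1 = 2*j+1 by omega, show (4:ℕ)^(j+j) = 16^j by rw [show (4:ℕ)=2^2 by norm_num, show (16:ℕ)=2^4 by norm_num, ← pow_mul, ← pow_mul]; congr 1; omega]
      exact central_sq j
    · subst hj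
      have h2 : (2*j+1)/2 = j := by omega
      rw [h2]
      have hid : (2*j+1) * Nat.choose (2*j) j = Nat.choose (2*j+1) (j+1) * (j+1) :=
        Nat.add_one_mul_choose_eq (2*j) j
      have hsymm : Nat.choose (2*j+1) (j+1) = Nat.choose (2*j+1) j := by
        have := Nat.choose_symm (n := 2*j+1) (k := j) (by omega)
        have hd : 2*j+1-j = j+1 := by omega
        rw [hd] at this; exact this
      rw [hsymm] at hid
      have key : (2*j+1+1) * (Nat.choose (2*j+1) j)^2 * (j+1)^2 ≤ 4^(2*j+1) * (j+1)^2 := by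
        have e1 : (Nat.choose (2*j+1) j)^2 * (j+1)^2 = ((Nat.choose (2*j+1) j) * (j+1))^2 := by ring
        calc (2*j+1+1) * (Nat.choose (2*j+1) j)^2 * (j+1)^2
            = (2*j+1+1) * (((Nat.choose (2*j+1) j) * (j+1))^2) := by rw [mul_assoc, e1]
          _ = (2*j+1+1) * (((2*j+1) * Nat.choose (2*j) j)^2) := by rw [← hid]
          _ = ((2*j+2) * (2*j+1)) * ((2*j+1) * (Nat.choose (2*j) j)^2) := by ring
          _ ≤ ((2*j+2) * (2*j+1)) * 16^j := by
              apply Nat.mul_le_mul_left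
              have := central_sq j
              calc (2*j+1) * (Nat.choose (2*j) j)^2
                  = (2*j+1) * (Nat.centralBinom j)^2 := by rw [Nat.centralBinom]
                _ ≤ 16^j := this
          _ ≤ (4 * (j+1)^2) * 16^j := by apply Nat.mul_le_mul_right; nlinarith
          _ = 4^(2*j+1) * (j+1)^2 := by
              rw [show (16:ℕ)^j = 4^(2*j) by rw [show (16:ℕ)=4^2 by norm_num, ← pow_mul], pow_succ]; ring
      exact Nat.le_of_mul_le_mul_right key (by positivity)
  calc (k+1) * (Nat.choose k t)^2 ≤ (k+1) * (Nat.choose k (k/2))^2 :=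
        Nat.mul_le_mul_left _ (Nat.pow_le_pow_left hm 2)
    _ ≤ 4^k := base


lemma pow10_le (n : ℕ) (hn : 64 ≤ n) : n^10 ≤ 2^n := by
  induction n with
  | zero => omega
  | succ n ih =>
    rcases Nat.lt_or_ge n 64 with h | h
    · have : n = 63 := by omega
      subst this; norm_num
    · have h1 : (n+1)^10 ≤ 2 * n^10 := by
        have h64 : 64*(n+1) ≤ 65*n := by omega
        have h2 : (64*(n+1))^10 ≤ (65*n)^10 := Nat.pow_le_pow_left h64 10
        have h3 : (64:ℕ)^10 * (n+1)^10 ≤ 65^10 * n^10 := by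
          calc (64:ℕ)^10 * (n+1)^10 = (64*(n+1))^10 := by rw [mul_pow]
            _ ≤ (65*n)^10 := h2
            _ = 65^10 * n^10 := by rw [mul_pow]
        have h4 : (65:ℕ)^10 * n^10 ≤ 2 * 64^10 * n^10 := by
          apply Nat.mul_le_mul_right; norm_num
        have h5 : (64:ℕ)^10 * (n+1)^10 ≤ 64^10 * (2 * n^10) := by
          calc (64:ℕ)^10 * (n+1)^10 ≤ 2 * 64^10 * n^10 := le_trans h3 h4
            _ = 64^10 * (2*n^10) := by ring
        exact Nat.le_of_mul_le_mul_left h5 (by norm_num)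
      calc (n+1)^10 ≤ 2 * n^10 := h1
        _ ≤ 2 * 2^n := by exact Nat.mul_le_mul_left _ (ih h)
        _ = 2^(n+1) := by rw [pow_succ]; ring

namespace Aux

variable {n : ℕ}

def ones (x : Fin n → Bool) : ℕ := (Finset.univ.filter (fun i => x i = true)).card

def bi (b : Bool) : ℤ := if b then 1 else 0

noncomputable def mu (f : (Fin n → Bool) → Bool) : ℤ :=
  ∑ x : Fin n → Bool, (-1)^(ones x) * bi (f x)

noncomputable def cube (F : Finset (Fin n)) (y : Fin n → Bool) : Finset (Fin n → Bool) :=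
  Finset.univ.filter (fun x => ∀ i, i ∉ F → x i = y i)

noncomputable def w (F : Finset (Fin n)) (x : Fin n → Bool) : ℤ :=
  ∏ i ∈ F, (if x i then -1 else 1)

lemma mem_cube {F : Finset (Fin n)} {y x : Fin n → Bool} :
    x ∈ cube F y ↔ ∀ i, i ∉ F → x i = y i := by
  simp [cube]

lemma cube_split {F : Finset (Fin n)} {i : Fin n} (hi : i ∈ F) (y : Fin n → Bool) (b : Bool) :
    cube (F.erase i) (Function.update y i b) = (cube F y).filter (fun x => x i = b) := by
  ext x
  simp only [Finset.mem_filter, mem_cube]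
  constructor
  · intro H
    have hxi : x i = b := by
      have := H i (Finset.notMem_erase i F)
      rwa [Function.update_self] at this
    refine ⟨fun j hj => ?_, hxi⟩
    have hji : j ≠ i := by rintro rfl; exact hj hi
    have := H j (by simp [Finset.mem_erase, hji, hj])
    rwa [Function.update_of_ne hji] at this
  · rintro ⟨H, hxi⟩ j hj
    rcases eq_or_ne j i with rfl | hji
    · rw [Function.update_self]; exact hxi
    · rw [Function.update_of_ne hji]
      exact H j (fun hjF => hj (Finset.mem_erase.2 ⟨hji, hjF⟩))

lemma w_split {F : Finset (Fin n)} {i : Fin n} (hi : i ∈ F) {x : Fin n → Bool} :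
    w F x = (if x i then -1 else 1) * w (F.erase i) x :=
  (Finset.mul_prod_erase F _ hi).symm

lemma w_update {F : Finset (Fin n)} {i : Fin n} (hi : i ∉ F) (x : Fin n → Bool) (b : Bool) :
    w F (Function.update x i b) = w F x := by
  unfold w
  refine Finset.prod_congr rfl fun j hj => ?_
  have hji : j ≠ i := by rintro rfl; exact hi hj
  rw [Function.update_of_ne hji]

lemma cube_w_sum (F : Finset (Fin n)) (y : Fin n → Bool) (hF : F.Nonempty) :
    ∑ x ∈ cube F y, w F x = 0 := by
  obtain ⟨i, hi⟩ := hF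
  have hsplit := Finset.sum_filter_add_sum_filter_not (cube F y) (fun x => x i = true) (w F)
  have hT : (cube F y).filter (fun x => x i = true) = cube (F.erase i) (Function.update y i true) :=
    (cube_split hi y true).symm
  have hFneg : (cube F y).filter (fun x => ¬ x i = true) = cube (F.erase i) (Function.update y i false) := by
    rw [cube_split hi y false]
    apply Finset.filter_congr
    intro x _
    simp
  rw [← hsplit, hT, hFneg]
  have h1 : ∑ x ∈ cube (F.erase i) (Function.update y i true), w F x
      = - ∑ x ∈ cube (F.erase i) (Function.update y i true), w (F.erase i) x := by
    rw [← Finset.sum_neg_distrib]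
    refine Finset.sum_congr rfl fun x hx => ?_
    have hxi : x i = true := by
      have := (mem_cube.1 hx) i (Finset.notMem_erase i F)
      rwa [Function.update_self] at this
    rw [w_split hi, hxi]; simp
  have h2 : ∑ x ∈ cube (F.erase i) (Function.update y i false), w F x
      = ∑ x ∈ cube (F.erase i) (Function.update y i false), w (F.erase i) x := by
    refine Finset.sum_congr rfl fun x hx => ?_
    have hxi : x i = false := by
      have := (mem_cube.1 hx) i (Finset.notMem_erase i F)
      rwa [Function.update_self] at this
    rw [w_split hi, hxi]; simp
  have h3 : ∑ x ∈ cube (F.erase i) (Function.update y i true), w (F.erase i) x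
      = ∑ x ∈ cube (F.erase i) (Function.update y i false), w (F.erase i) x := by
    refine Finset.sum_nbij' (fun x => Function.update x i false) (fun x => Function.update x i true)
      ?_ ?_ ?_ ?_ ?_
    · intro x hx
      rw [mem_cube] at hx ⊢
      intro j hj
      rcases eq_or_ne j i with rfl | hji
      · simp
      · have h' := hx j hj
        rw [Function.update_of_ne hji] at h'
        simpa [Function.update_of_ne hji] using h'
    · intro x hx
      rw [mem_cube] at hx ⊢
      intro j hj
      rcases eq_or_ne j i with rfl | hji
      · simp
      · have h' := hx j hj
        rw [Function.update_of_ne hji] at h'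
        simpa [Function.update_of_ne hji] using h'
    · intro x hx
      have hxi : x i = true := by
        have := (mem_cube.1 hx) i (Finset.notMem_erase i F)
        rwa [Function.update_self] at this
      funext j
      rcases eq_or_ne j i with rfl | hji
      · simp [hxi]
      · simp [Function.update_apply, hji]
    · intro x hx
      have hxi : x i = false := by
        have := (mem_cube.1 hx) i (Finset.notMem_erase i F)
        rwa [Function.update_self] at this
      funext j
      rcases eq_or_ne j i with rfl | hji
      · simp [hxi]
      · simp [Function.update_apply, hji]
    · intro x hx
      exact (w_update (Finset.notMem_erase i F) x false).symm
  rw [h1, h2, h3]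
  ring

lemma tree_sum (T : DTree n) : ∀ (F : Finset (Fin n)) (y : Fin n → Bool),
    T.depth < F.card → ∑ x ∈ cube F y, w F x * bi (T.eval x) = 0 := by
  induction T with
  | leaf b =>
    intro F y hd
    have hF : F.Nonempty := Finset.card_pos.1 (by omega)
    have : ∑ x ∈ cube F y, w F x * bi (DTree.eval (DTree.leaf b) x)
        = (∑ x ∈ cube F y, w F x) * bi b := by
      simp only [DTree.eval]
      rw [Finset.sum_mul]
    rw [this, cube_w_sum F y hF]
    ring
  | node i t0 t1 ih0 ih1 =>
    intro F y hd
    by_cases hi : i ∈ F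
    · have hcard : 1 ≤ F.card := Finset.card_pos.2 ⟨i, hi⟩
      have hsplit := Finset.sum_filter_add_sum_filter_not (cube F y) (fun x => x i = true)
        (fun x => w F x * bi (DTree.eval (DTree.node i t0 t1) x))
      have hT : (cube F y).filter (fun x => x i = true)
          = cube (F.erase i) (Function.update y i true) := (cube_split hi y true).symm
      have hFneg : (cube F y).filter (fun x => ¬ x i = true)
          = cube (F.erase i) (Function.update y i false) := by
        rw [cube_split hi y false]
        apply Finset.filter_congr
        intro x _
        simp
      have hce : (F.erase i).card = F.card - 1 := Finset.card_erase_of_mem hi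
      have hdepth : DTree.depth (DTree.node i t0 t1) = 1 + max t0.depth t1.depth := rfl
      have h1 : ∑ x ∈ cube (F.erase i) (Function.update y i true),
          w F x * bi (DTree.eval (DTree.node i t0 t1) x)
          = - ∑ x ∈ cube (F.erase i) (Function.update y i true), w (F.erase i) x * bi (t1.eval x) := by
        rw [← Finset.sum_neg_distrib]
        refine Finset.sum_congr rfl fun x hx => ?_
        have hxi : x i = true := by
          have := (mem_cube.1 hx) i (Finset.notMem_erase i F)
          rwa [Function.update_self] at this
        rw [w_split hi, hxi]
        show (-1) * w (F.erase i) x * bi (if x i then t1.eval x else t0.eval x) = _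
        rw [hxi]
        simp
      have h2 : ∑ x ∈ cube (F.erase i) (Function.update y i false),
          w F x * bi (DTree.eval (DTree.node i t0 t1) x)
          = ∑ x ∈ cube (F.erase i) (Function.update y i false), w (F.erase i) x * bi (t0.eval x) := by
        refine Finset.sum_congr rfl fun x hx => ?_
        have hxi : x i = false := by
          have := (mem_cube.1 hx) i (Finset.notMem_erase i F)
          rwa [Function.update_self] at this
        rw [w_split hi, hxi]
        show 1 * w (F.erase i) x * bi (if x i then t1.eval x else t0.eval x) = _
        rw [hxi]
        simp
      have hd' : 1 + max t0.depth t1.depth < F.card := hd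
      have hd1 : t1.depth < (F.erase i).card := by clear * - hd' hce; omega
      have hd0 : t0.depth < (F.erase i).card := by clear * - hd' hce; omega
      rw [← hsplit, hT, hFneg, h1, h2]
      rw [ih1 (F.erase i) (Function.update y i true) hd1,
          ih0 (F.erase i) (Function.update y i false) hd0]
      ring
    · have key : ∀ x ∈ cube F y, w F x * bi (DTree.eval (DTree.node i t0 t1) x)
          = w F x * bi (DTree.eval (if y i then t1 else t0) x) := by
        intro x hx
        have hxi : x i = y i := (mem_cube.1 hx) i hi
        show w F x * bi (if x i then t1.eval x else t0.eval x) = _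
        rw [hxi]
        cases hyi : y i <;> simp [hyi]
      rw [Finset.sum_congr rfl key]
      have hd' : 1 + max t0.depth t1.depth < F.card := hd
      cases hyi : y i
      · simpa using ih0 F y (by omega)
      · simpa using ih1 F y (by omega)

lemma mu_of_not_evasive {f : (Fin n → Bool) → Bool} (h : ¬ Evasive f) : mu f = 0 := by
  unfold Evasive at h
  push_neg at h
  obtain ⟨T, hT, hd⟩ := h
  have hcube : cube (Finset.univ : Finset (Fin n)) (fun _ => false) = Finset.univ := by
    ext x; simp [mem_cube]
  have hw : ∀ x : Fin n → Bool, w (Finset.univ : Finset (Fin n)) x = (-1)^(ones x) := by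
    intro x
    unfold w ones
    rw [Finset.prod_ite, Finset.prod_const, Finset.prod_const_one, mul_one]
  have hcard : (Finset.univ : Finset (Fin n)).card = n := by simp
  have := tree_sum T Finset.univ (fun _ => false) (by omega)
  rw [hcube] at this
  unfold mu
  rw [← this]
  refine Finset.sum_congr rfl fun x _ => ?_
  rw [hw x, hT x]


def FreeP (f : (Fin n → Bool) → Bool) (x : Fin n → Bool) : Prop :=
  (∀ y, y < x → f y = false) ∧ (∀ y, x < y → f y = true)

noncomputable def Flev (f : (Fin n → Bool) → Bool) (l : ℕ) : Finset (Fin n → Bool) :=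
  Finset.univ.filter (fun x => ones x = l ∧ FreeP f x)

noncomputable def Phi (l : ℕ) (f : (Fin n → Bool) → Bool) : (Fin n → Bool) → Bool :=
  fun x => if x ∈ Flev f l then false else f x

noncomputable def setT (g : (Fin n → Bool) → Bool) (T : Finset (Fin n → Bool)) :
    (Fin n → Bool) → Bool :=
  fun x => if x ∈ T then true else g x

noncomputable def MinT (f : (Fin n → Bool) → Bool) : Finset (Fin n → Bool) :=
  Finset.univ.filter (fun x => f x = true ∧ ∀ y, y < x → f y = false)

lemma ones_le_of_le {x y : Fin n → Bool} (h : x ≤ y) : ones x ≤ ones y := by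
  apply Finset.card_le_card
  intro i hi
  simp only [Finset.mem_filter, Finset.mem_univ, true_and] at hi ⊢
  exact Bool.le_iff_imp.1 (h i) hi

lemma ones_lt_of_lt {x y : Fin n → Bool} (h : x < y) : ones x < ones y := by
  apply Finset.card_lt_card
  rw [Finset.ssubset_iff_subset_ne]
  constructor
  · intro i hi
    simp only [Finset.mem_filter, Finset.mem_univ, true_and] at hi ⊢
    exact Bool.le_iff_imp.1 (h.le i) hi
  · intro he
    apply h.ne
    funext i
    have : (i ∈ Finset.univ.filter (fun i => x i = true)) ↔
        (i ∈ Finset.univ.filter (fun i => y i = true)) := by rw [he]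
    simp only [Finset.mem_filter, Finset.mem_univ, true_and] at this
    cases hxi : x i
    · cases hyi : y i
      · rfl
      · have := h.le i
        rw [hxi, hyi] at this
        -- x i = false ≤ y i = true, fine, but need x i = y i contradiction via `this` iff
        exact absurd (‹(x i = true) ↔ (y i = true)›.2 hyi) (by simp [hxi])
    · rw [this.1 hxi]

lemma ones_le_n (x : Fin n → Bool) : ones x ≤ n := by
  calc ones x ≤ (Finset.univ : Finset (Fin n)).card := Finset.card_le_card (Finset.filter_subset _ _)
    _ = n := by simp

lemma mem_Flev {f : (Fin n → Bool) → Bool} {l : ℕ} {x : Fin n → Bool} :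
    x ∈ Flev f l ↔ ones x = l ∧ FreeP f x := by simp [Flev]

lemma FreeP_congr {f g : (Fin n → Bool) → Bool} {x : Fin n → Bool}
    (h : ∀ z, z < x ∨ x < z → f z = g z) : FreeP f x ↔ FreeP g x := by
  unfold FreeP
  constructor
  · rintro ⟨h1, h2⟩
    exact ⟨fun y hy => (h y (Or.inl hy)).symm.trans (h1 y hy),
           fun y hy => (h y (Or.inr hy)).symm.trans (h2 y hy)⟩
  · rintro ⟨h1, h2⟩
    exact ⟨fun y hy => (h y (Or.inl hy)).trans (h1 y hy),
           fun y hy => (h y (Or.inr hy)).trans (h2 y hy)⟩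

lemma mono_Phi {f : (Fin n → Bool) → Bool} (hf : Monotone f) (l : ℕ) :
    Monotone (Phi l f) := by
  intro a b hab
  rw [Bool.le_iff_imp]
  intro ha
  unfold Phi at ha ⊢
  by_cases haF : a ∈ Flev f l
  · simp [haF] at ha
  · rw [if_neg haF] at ha
    have hfb : f b = true := Bool.le_iff_imp.1 (hf hab) ha
    have hbF : b ∉ Flev f l := by
      intro hbF
      rcases lt_or_eq_of_le hab with hlt | rfl
      · have := (mem_Flev.1 hbF).2.1 a hlt
        rw [ha] at this; exact absurd this (by simp)
      · exact haF hbF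
    rw [if_neg hbF]
    exact hfb

lemma mono_setT {g : (Fin n → Bool) → Bool} (hg : Monotone g) {l : ℕ}
    {T : Finset (Fin n → Bool)} (hT : T ⊆ Flev g l) : Monotone (setT g T) := by
  intro a b hab
  rw [Bool.le_iff_imp]
  intro ha
  unfold setT at ha ⊢
  by_cases haT : a ∈ T
  · have haF := mem_Flev.1 (hT haT)
    rcases lt_or_eq_of_le hab with hlt | rfl
    · have hgb : g b = true := haF.2.2 b hlt
      by_cases hbT : b ∈ T
      · rw [if_pos hbT]
      · rw [if_neg hbT]; exact hgb
    · rw [if_pos haT]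
  · rw [if_neg haT] at ha
    have hgb : g b = true := Bool.le_iff_imp.1 (hg hab) ha
    by_cases hbT : b ∈ T
    · rw [if_pos hbT]
    · rw [if_neg hbT]; exact hgb

lemma Flev_Phi (f : (Fin n → Bool) → Bool) (l : ℕ) : Flev (Phi l f) l = Flev f l := by
  unfold Flev
  apply Finset.filter_congr
  intro x _
  by_cases hx : ones x = l
  · simp only [hx, true_and]
    apply FreeP_congr
    intro z hz
    unfold Phi
    have hzF : z ∉ Flev f l := by
      intro hzF
      have hol : ones z = l := (mem_Flev.1 hzF).1
      rcases hz with hlt | hlt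
      · have := ones_lt_of_lt hlt; omega
      · have := ones_lt_of_lt hlt; omega
    rw [if_neg hzF]
  · simp [hx]

lemma Flev_setT {g : (Fin n → Bool) → Bool} {l : ℕ} {T : Finset (Fin n → Bool)}
    (hT : T ⊆ Flev g l) : Flev (setT g T) l = Flev g l := by
  unfold Flev
  apply Finset.filter_congr
  intro x _
  by_cases hx : ones x = l
  · simp only [hx, true_and]
    apply FreeP_congr
    intro z hz
    unfold setT
    have hzT : z ∉ T := by
      intro hzT
      have hol : ones z = l := (mem_Flev.1 (hT hzT)).1
      rcases hz with hlt | hlt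
      · have := ones_lt_of_lt hlt; omega
      · have := ones_lt_of_lt hlt; omega
    rw [if_neg hzT]
  · simp [hx]

lemma Phi_setT {g : (Fin n → Bool) → Bool} {l : ℕ} (hg : ∀ x ∈ Flev g l, g x = false)
    {T : Finset (Fin n → Bool)} (hT : T ⊆ Flev g l) : Phi l (setT g T) = g := by
  funext x
  unfold Phi
  rw [Flev_setT hT]
  by_cases hxF : x ∈ Flev g l
  · rw [if_pos hxF, hg x hxF]
  · rw [if_neg hxF]
    unfold setT
    rw [if_neg (fun hxT => hxF (hT hxT))]

lemma setT_Phi (f : (Fin n → Bool) → Bool) (l : ℕ) :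
    setT (Phi l f) ((Flev f l).filter (fun x => f x = true)) = f := by
  funext x
  unfold setT Phi
  by_cases hxT : x ∈ (Flev f l).filter (fun x => f x = true)
  · rw [if_pos hxT]
    exact ((Finset.mem_filter.1 hxT).2).symm
  · rw [if_neg hxT]
    by_cases hxF : x ∈ Flev f l
    · rw [if_pos hxF]
      have : ¬ f x = true := fun h => hxT (Finset.mem_filter.2 ⟨hxF, h⟩)
      simp at this
      exact this.symm
    · rw [if_neg hxF]

lemma setT_inj {g : (Fin n → Bool) → Bool} {l : ℕ} (hg : ∀ x ∈ Flev g l, g x = false)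
    {T T' : Finset (Fin n → Bool)} (hT : T ⊆ Flev g l) (hT' : T' ⊆ Flev g l)
    (h : setT g T = setT g T') : T = T' := by
  ext x
  constructor
  · intro hx
    have : setT g T x = true := by unfold setT; rw [if_pos hx]
    rw [h] at this
    unfold setT at this
    by_cases hx' : x ∈ T'
    · exact hx'
    · rw [if_neg hx'] at this
      rw [hg x (hT hx)] at this
      exact absurd this (by simp)
  · intro hx
    have : setT g T' x = true := by unfold setT; rw [if_pos hx]
    rw [← h] at this
    unfold setT at this
    by_cases hx' : x ∈ T
    · exact hx'
    · rw [if_neg hx'] at this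
      rw [hg x (hT' hx)] at this
      exact absurd this (by simp)

lemma mu_setT {g : (Fin n → Bool) → Bool} {l : ℕ} (hg : ∀ x ∈ Flev g l, g x = false)
    {T : Finset (Fin n → Bool)} (hT : T ⊆ Flev g l) :
    mu (setT g T) = mu g + (-1)^l * T.card := by
  unfold mu
  have key : ∀ x : Fin n → Bool,
      (-1 : ℤ)^(ones x) * bi (setT g T x)
      = (-1)^(ones x) * bi (g x) + (if x ∈ T then (-1:ℤ)^l else 0) := by
    intro x
    by_cases hxT : x ∈ T
    · have hxF := hT hxT
      have hol : ones x = l := (mem_Flev.1 hxF).1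
      have hgx : g x = false := hg x hxF
      have hsx : setT g T x = true := by unfold setT; rw [if_pos hxT]
      rw [hsx, hgx, if_pos hxT, hol]
      simp [bi]
    · have hsx : setT g T x = g x := by unfold setT; rw [if_neg hxT]
      rw [hsx, if_neg hxT]
      ring
  rw [Finset.sum_congr rfl (fun x _ => key x), Finset.sum_add_distrib]
  congr 1
  rw [Finset.sum_ite_mem, Finset.univ_inter, Finset.sum_const, nsmul_eq_mul]
  ring

noncomputable def Mset (n : ℕ) : Finset ((Fin n → Bool) → Bool) :=
  Finset.univ.filter (fun f => Monotone f)

lemma fiber_eq {g : (Fin n → Bool) → Bool} {l : ℕ} (hmg : Monotone g)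
    (hg : ∀ x ∈ Flev g l, g x = false) :
    (Mset n).filter (fun f => Phi l f = g) = (Flev g l).powerset.image (setT g) := by
  ext f
  simp only [Finset.mem_filter, Finset.mem_image, Finset.mem_powerset, Mset,
    Finset.mem_univ, true_and]
  constructor
  · rintro ⟨hmf, hPf⟩
    refine ⟨(Flev f l).filter (fun x => f x = true), ?_, ?_⟩
    · have : Flev f l = Flev g l := by rw [← hPf, Flev_Phi]
      rw [← this]
      exact Finset.filter_subset _ _
    · rw [← hPf]
      exact setT_Phi f l
  · rintro ⟨T, hT, rfl⟩
    exact ⟨mono_setT hmg hT, Phi_setT hg hT⟩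

lemma fiber_card {g : (Fin n → Bool) → Bool} {l : ℕ} (hmg : Monotone g)
    (hg : ∀ x ∈ Flev g l, g x = false) :
    ((Mset n).filter (fun f => Phi l f = g)).card = 2^((Flev g l).card) := by
  rw [fiber_eq hmg hg, Finset.card_image_of_injOn, Finset.card_powerset]
  intro T hT T' hT' h
  exact setT_inj hg (Finset.mem_powerset.1 hT) (Finset.mem_powerset.1 hT') h

lemma bad_fiber_card {g : (Fin n → Bool) → Bool} {l : ℕ} (hmg : Monotone g)
    (hg : ∀ x ∈ Flev g l, g x = false) :
    (((Mset n).filter (fun f => Phi l f = g)).filter (fun f => mu f = 0)).card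
      ≤ Nat.choose ((Flev g l).card) (((-1:ℤ)^l * (- mu g)).toNat) := by
  set t0 := (((-1:ℤ)^l * (- mu g))).toNat
  rw [fiber_eq hmg hg, Finset.filter_image]
  calc ((((Flev g l).powerset.filter (fun T => mu (setT g T) = 0))).image (setT g)).card
      ≤ ((Flev g l).powerset.filter (fun T => mu (setT g T) = 0)).card :=
        Finset.card_image_le
    _ ≤ (Finset.powersetCard t0 (Flev g l)).card := by
        apply Finset.card_le_card
        intro T hT
        rw [Finset.mem_filter, Finset.mem_powerset] at hT
        obtain ⟨hsub, hmu⟩ := hT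
        rw [Finset.mem_powersetCard]
        refine ⟨hsub, ?_⟩
        rw [mu_setT hg hsub] at hmu
        have h1 : ((-1:ℤ)^l) * ((-1)^l * T.card) = (-1:ℤ)^l * (- mu g) := by
          rw [show (-1:ℤ)^l * (T.card) = - mu g by linarith]
        rw [← mul_assoc, ← pow_add] at h1
        have h2 : (-1:ℤ)^(l+l) = 1 := by
          rw [show l + l = 2*l by ring, pow_mul]
          norm_num
        rw [h2, one_mul] at h1
        have : (T.card : ℤ) = t0 := by
          rw [h1]
          rw [Int.toNat_of_nonneg (by rw [← h1]; positivity)]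
        exact_mod_cast this
    _ = Nat.choose ((Flev g l).card) t0 := Finset.card_powersetCard _ _

lemma Flev_card_of_fiber {f g : (Fin n → Bool) → Bool} {l : ℕ}
    (h : Phi l f = g) : (Flev f l).card = (Flev g l).card := by
  rw [← h, Flev_Phi]

lemma bad_global (l K : ℕ) :
    ((Mset n).filter (fun f => mu f = 0 ∧ K ≤ (Flev f l).card)).card * Nat.sqrt (K+1)
      ≤ (Mset n).card := by
  classical
  set MK := (Mset n).filter (fun f => K ≤ (Flev f l).card) with hMK
  set Bad := (Mset n).filter (fun f => mu f = 0 ∧ K ≤ (Flev f l).card) with hBad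
  have hBadMK : Bad ⊆ MK := by
    intro f hf
    rw [hBad, Finset.mem_filter] at hf
    rw [hMK, Finset.mem_filter]
    exact ⟨hf.1, hf.2.2⟩
  set I := MK.image (Phi l) with hI
  have hcard1 : Bad.card = ∑ g ∈ I, (Bad.filter (fun f => Phi l f = g)).card :=
    Finset.card_eq_sum_card_fiberwise (fun f hf => Finset.mem_image_of_mem _ (hBadMK hf))
  have hcard2 : MK.card = ∑ g ∈ I, (MK.filter (fun f => Phi l f = g)).card :=
    Finset.card_eq_sum_card_fiberwise (fun f hf => Finset.mem_image_of_mem _ hf)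
  have key : ∀ g ∈ I, (Bad.filter (fun f => Phi l f = g)).card * Nat.sqrt (K+1)
      ≤ (MK.filter (fun f => Phi l f = g)).card := by
    intro g hgI
    rw [hI, Finset.mem_image] at hgI
    obtain ⟨f0, hf0MK, hf0⟩ := hgI
    rw [hMK, Finset.mem_filter, Mset, Finset.mem_filter] at hf0MK
    obtain ⟨⟨_, hmf0⟩, hKf0⟩ := hf0MK
    have hmg : Monotone g := by rw [← hf0]; exact mono_Phi hmf0 l
    have hgfalse : ∀ x ∈ Flev g l, g x = false := by
      intro x hx
      rw [← hf0] at hx ⊢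
      rw [Flev_Phi] at hx
      unfold Phi
      rw [if_pos hx]
    have hk : K ≤ (Flev g l).card := by
      rw [← Flev_card_of_fiber hf0]
      exact hKf0
    -- fibers in MK equal fibers in Mset
    have hfib_eq : MK.filter (fun f => Phi l f = g) = (Mset n).filter (fun f => Phi l f = g) := by
      rw [hMK, Finset.filter_filter]
      apply Finset.filter_congr
      intro f hf
      constructor
      · rintro ⟨_, h2⟩; exact h2
      · intro h2
        refine ⟨?_, h2⟩
        rw [Flev_card_of_fiber h2]
        exact hk
    have hbfib_sub : Bad.filter (fun f => Phi l f = g)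
        ⊆ ((Mset n).filter (fun f => Phi l f = g)).filter (fun f => mu f = 0) := by
      intro f hf
      rw [hBad, Finset.mem_filter, Finset.mem_filter] at hf
      rw [Finset.mem_filter, Finset.mem_filter]
      exact ⟨⟨hf.1.1, hf.2⟩, hf.1.2.1⟩
    set k := (Flev g l).card
    set t0 := (((-1:ℤ)^l * (- mu g))).toNat
    have hb1 : (Bad.filter (fun f => Phi l f = g)).card ≤ Nat.choose k t0 :=
      le_trans (Finset.card_le_card hbfib_sub) (bad_fiber_card hmg hgfalse)
    have hsq : Nat.choose k t0 * Nat.sqrt (K+1) ≤ 2^k := by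
      have h1 : (Nat.choose k t0 * Nat.sqrt (K+1))^2 ≤ (2^k)^2 := by
        calc (Nat.choose k t0 * Nat.sqrt (K+1))^2
            = (Nat.choose k t0)^2 * (Nat.sqrt (K+1) * Nat.sqrt (K+1)) := by ring
          _ ≤ (Nat.choose k t0)^2 * (K+1) :=
              Nat.mul_le_mul_left _ (Nat.sqrt_le (K+1))
          _ ≤ (Nat.choose k t0)^2 * (k+1) := by
              apply Nat.mul_le_mul_left; omega
          _ ≤ 4^k := by
              have h := choose_sq_le k t0
              nlinarith [h]
          _ = (2^k)^2 := by
              rw [show (4:ℕ) = 2^2 by norm_num, ← pow_mul, ← pow_mul]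
              congr 1
              ring
      exact Nat.pow_le_pow_iff_left (by norm_num) |>.1 h1
    calc (Bad.filter (fun f => Phi l f = g)).card * Nat.sqrt (K+1)
        ≤ Nat.choose k t0 * Nat.sqrt (K+1) := Nat.mul_le_mul_right _ hb1
      _ ≤ 2^k := hsq
      _ = ((Mset n).filter (fun f => Phi l f = g)).card := (fiber_card hmg hgfalse).symm
      _ = (MK.filter (fun f => Phi l f = g)).card := by rw [hfib_eq]
  calc Bad.card * Nat.sqrt (K+1)
      = ∑ g ∈ I, (Bad.filter (fun f => Phi l f = g)).card * Nat.sqrt (K+1) := by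
        rw [hcard1, Finset.sum_mul]
    _ ≤ ∑ g ∈ I, (MK.filter (fun f => Phi l f = g)).card := Finset.sum_le_sum key
    _ = MK.card := hcard2.symm
    _ ≤ (Mset n).card := Finset.card_le_card (Finset.filter_subset _ _)


lemma exists_minT {f : (Fin n → Bool) → Bool} (hf : Monotone f) :
    ∀ k (x : Fin n → Bool), ones x = k → f x = true → ∃ z ∈ MinT f, z ≤ x := by
  intro k
  induction k using Nat.strong_induction_on with
  | _ k ih =>
    intro x hx hfx
    by_cases hmin : ∀ y, y < x → f y = false
    · exact ⟨x, by simp only [MinT, Finset.mem_filter, Finset.mem_univ, true_and]; exact ⟨hfx, hmin⟩, le_refl x⟩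
    · push_neg at hmin
      obtain ⟨y, hyx, hfy⟩ := hmin
      have hfy' : f y = true := by
        cases h : f y
        · exact absurd h hfy
        · rfl
      have hlt : ones y < k := hx ▸ ones_lt_of_lt hyx
      obtain ⟨z, hz, hzy⟩ := ih (ones y) hlt y rfl hfy'
      exact ⟨z, hz, le_trans hzy (le_of_lt hyx)⟩

lemma true_iff_minT {f : (Fin n → Bool) → Bool} (hf : Monotone f) (x : Fin n → Bool) :
    f x = true ↔ ∃ z ∈ MinT f, z ≤ x := by
  constructor
  · exact exists_minT hf (ones x) x rfl
  · rintro ⟨z, hz, hzx⟩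
    have hfz : f z = true := by
      simp only [MinT, Finset.mem_filter] at hz
      exact hz.2.1
    exact Bool.le_iff_imp.1 (hf hzx) hfz

lemma minT_inj {f f' : (Fin n → Bool) → Bool} (hf : Monotone f) (hf' : Monotone f')
    (h : MinT f = MinT f') : f = f' := by
  funext x
  have h1 := true_iff_minT hf x
  have h2 := true_iff_minT hf' x
  rw [h] at h1
  cases hx : f x
  · cases hx' : f' x
    · rfl
    · exact absurd (h1.2 (h2.1 hx')) (by simp [hx])
  · rw [h2.2 (h1.1 hx)]

lemma minT_sub_Flev {f : (Fin n → Bool) → Bool} (hf : Monotone f) {x : Fin n → Bool}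
    (hx : x ∈ MinT f) : x ∈ Flev f (ones x) := by
  simp only [MinT, Finset.mem_filter] at hx
  rw [mem_Flev]
  refine ⟨rfl, hx.2.2, fun y hy => ?_⟩
  exact Bool.le_iff_imp.1 (hf (le_of_lt hy)) hx.2.1

lemma minT_card {f : (Fin n → Bool) → Bool} (hf : Monotone f) :
    (MinT f).card = ∑ l ∈ Finset.range (n+1), ((MinT f).filter (fun x => ones x = l)).card := by
  apply Finset.card_eq_sum_card_fiberwise
  intro x _
  rw [Finset.mem_coe, Finset.mem_range]
  have := ones_le_n x
  omega

lemma minT_filter_sub {f : (Fin n → Bool) → Bool} (hf : Monotone f) (l : ℕ) :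
    (MinT f).filter (fun x => ones x = l) ⊆ Flev f l := by
  intro x hx
  rw [Finset.mem_filter] at hx
  have := minT_sub_Flev hf hx.1
  rwa [hx.2] at this

lemma minT_card_le {f : (Fin n → Bool) → Bool} (hf : Monotone f) {K : ℕ} (hK : 1 ≤ K)
    (h : ∀ l, l ≤ n → (Flev f l).card < K) : (MinT f).card < (n+1) * K := by
  rw [minT_card hf]
  calc ∑ l ∈ Finset.range (n+1), ((MinT f).filter (fun x => ones x = l)).card
      ≤ ∑ l ∈ Finset.range (n+1), (K-1) := by
        apply Finset.sum_le_sum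
        intro l hl
        rw [Finset.mem_range] at hl
        have h1 := Finset.card_le_card (minT_filter_sub hf l)
        have h2 := h l (by omega)
        omega
    _ = (n+1) * (K-1) := by rw [Finset.sum_const, Finset.card_range, smul_eq_mul]
    _ < (n+1) * K := by
        have h1 : K - 1 < K := by omega
        exact (Nat.mul_lt_mul_left (by omega : 0 < n+1)).2 h1

lemma card_small_sets (s : ℕ) (hs : 1 ≤ s) :
    ((Finset.univ : Finset (Finset (Fin n → Bool))).filter (fun S => S.card < s)).card
      ≤ s * (2^n)^s := by
  have hsub : ((Finset.univ : Finset (Finset (Fin n → Bool))).filter (fun S => S.card < s))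
      ⊆ (Finset.range s).biUnion (fun j => Finset.powersetCard j Finset.univ) := by
    intro S hS
    rw [Finset.mem_filter] at hS
    rw [Finset.mem_biUnion]
    exact ⟨S.card, Finset.mem_range.2 hS.2, Finset.mem_powersetCard.2 ⟨Finset.subset_univ S, rfl⟩⟩
  calc ((Finset.univ : Finset (Finset (Fin n → Bool))).filter (fun S => S.card < s)).card
      ≤ ((Finset.range s).biUnion (fun j => Finset.powersetCard j Finset.univ)).card :=
        Finset.card_le_card hsub
    _ ≤ ∑ j ∈ Finset.range s, (Finset.powersetCard j (Finset.univ : Finset (Fin n → Bool))).card :=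
        Finset.card_biUnion_le
    _ ≤ ∑ j ∈ Finset.range s, (2^n)^s := by
        apply Finset.sum_le_sum
        intro j hj
        rw [Finset.mem_range] at hj
        rw [Finset.card_powersetCard]
        have hcu : (Finset.univ : Finset (Fin n → Bool)).card = 2^n := by
          rw [Finset.card_univ]
          simp [Fintype.card_fun]
        rw [hcu]
        calc Nat.choose (2^n) j ≤ (2^n)^j := Nat.choose_le_pow _ _
          _ ≤ (2^n)^s := Nat.pow_le_pow_right (Nat.one_le_two_pow) (by omega)
    _ = s * (2^n)^s := by rw [Finset.sum_const, Finset.card_range, smul_eq_mul]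

lemma Aset_card (s : ℕ) (hs : 1 ≤ s) :
    (((Mset n)).filter (fun f => (MinT f).card < s)).card ≤ s * (2^n)^s := by
  refine le_trans (Finset.card_le_card_of_injOn (fun f => MinT f) ?_ ?_) (card_small_sets s hs)
  · intro f hf
    rw [Finset.mem_coe, Finset.mem_filter] at hf
    rw [Finset.mem_coe, Finset.mem_filter]
    exact ⟨Finset.mem_univ _, hf.2⟩
  · intro f hf f' hf' h
    rw [Finset.mem_coe, Finset.mem_filter, Mset, Finset.mem_filter] at hf hf'
    exact minT_inj hf.1.2 hf'.1.2 h


noncomputable def mid (n : ℕ) : Finset (Fin n → Bool) :=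
  Finset.univ.filter (fun x => ones x = n/2)

lemma mid_card : (mid n).card = Nat.choose n (n/2) := by
  classical
  have key : (mid n).card = (Finset.powersetCard (n/2) (Finset.univ : Finset (Fin n))).card := by
    refine Finset.card_bij' (fun x _ => Finset.univ.filter (fun i => x i = true))
      (fun S _ => (fun i => decide (i ∈ S))) ?hi ?hj ?li ?ri
    case hi =>
      intro x hx
      rw [Finset.mem_powersetCard]
      refine ⟨Finset.filter_subset _ _, ?_⟩
      simp only [mid, Finset.mem_filter] at hx
      exact hx.2
    case hj =>
      intro S hS
      rw [Finset.mem_powersetCard] at hS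
      simp only [mid, Finset.mem_filter, Finset.mem_univ, true_and]
      rw [← hS.2]
      unfold ones
      congr 1
      ext i
      simp
    case li =>
      intro x hx
      funext i
      simp only [Finset.mem_filter, Finset.mem_univ, true_and]
      cases h : x i <;> simp [h]
    case ri =>
      intro S hS
      ext i
      simp only [Finset.mem_filter, Finset.mem_univ, true_and, decide_eq_true_eq]
  rw [key, Finset.card_powersetCard]
  congr 1
  simp

noncomputable def smap (n : ℕ) (S : Finset (Fin n → Bool)) : (Fin n → Bool) → Bool :=
  fun x => if n/2 < ones x then true else decide (x ∈ S)

lemma smap_mono {S : Finset (Fin n → Bool)} (hS : S ⊆ mid n) : Monotone (smap n S) := by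
  intro a b hab
  rw [Bool.le_iff_imp]
  intro ha
  unfold smap at ha ⊢
  by_cases hao : n/2 < ones a
  · have : n/2 < ones b := lt_of_lt_of_le hao (ones_le_of_le hab)
    rw [if_pos this]
  · rw [if_neg hao, decide_eq_true_eq] at ha
    have hamid : ones a = n/2 := by
      have := (Finset.mem_filter.1 (hS ha)).2
      exact this
    rcases lt_or_eq_of_le hab with hlt | rfl
    · have : n/2 < ones b := by
        have := ones_lt_of_lt hlt
        omega
      rw [if_pos this]
    · rw [if_neg hao, decide_eq_true_eq]
      exact ha

lemma smap_inj {S S' : Finset (Fin n → Bool)} (hS : S ⊆ mid n) (hS' : S' ⊆ mid n)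
    (h : smap n S = smap n S') : S = S' := by
  have key : ∀ (A B : Finset (Fin n → Bool)), A ⊆ mid n → B ⊆ mid n →
      smap n A = smap n B → ∀ x ∈ A, x ∈ B := by
    intro A B hA hB hAB x hx
    have hxm : ones x = n/2 := (Finset.mem_filter.1 (hA hx)).2
    have h1 : smap n A x = true := by
      unfold smap
      rw [if_neg (by omega)]
      exact decide_eq_true hx
    rw [hAB] at h1
    unfold smap at h1
    rw [if_neg (by omega), decide_eq_true_eq] at h1
    exact h1
  ext x
  exact ⟨key S S' hS hS' h x, key S' S hS' hS h.symm x⟩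

lemma Mset_lower : 2^(Nat.choose n (n/2)) ≤ (Mset n).card := by
  rw [← mid_card, ← Finset.card_powerset]
  apply Finset.card_le_card_of_injOn (fun S => smap n S)
  · intro S hS
    rw [Finset.mem_coe, Finset.mem_powerset] at hS
    rw [Finset.mem_coe, Mset, Finset.mem_filter]
    exact ⟨Finset.mem_univ _, smap_mono hS⟩
  · intro S hS S' hS' h
    rw [Finset.mem_coe, Finset.mem_powerset] at hS hS'
    exact smap_inj hS hS' h

lemma two_pow_le_choose (n : ℕ) : 2^n ≤ (n+1) * Nat.choose n (n/2) := by
  calc 2^n = ∑ j ∈ Finset.range (n+1), Nat.choose n j := (Nat.sum_range_choose n).symm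
    _ ≤ ∑ j ∈ Finset.range (n+1), Nat.choose n (n/2) :=
        Finset.sum_le_sum (fun j _ => Nat.choose_le_middle j n)
    _ = (n+1) * Nat.choose n (n/2) := by rw [Finset.sum_const, Finset.card_range, smul_eq_mul]


lemma Mset_pos : 0 < (Mset n).card := by
  apply Finset.card_pos.2
  exact ⟨fun _ => true, Finset.mem_filter.2 ⟨Finset.mem_univ _, monotone_const⟩⟩

lemma NE_subset (n : ℕ) (hn : 1 ≤ n) :
    (Mset n).filter (fun f => ¬ Evasive f) ⊆
      ((Mset n).filter (fun f => (MinT f).card < (n+1)*n^4)) ∪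
      (Finset.range (n+1)).biUnion
        (fun l => (Mset n).filter (fun f => mu f = 0 ∧ n^4 ≤ (Flev f l).card)) := by
  intro f hf
  rw [Finset.mem_filter] at hf
  obtain ⟨hfM, hfNE⟩ := hf
  have hmf : Monotone f := (Finset.mem_filter.1 hfM).2
  have hmu : mu f = 0 := mu_of_not_evasive hfNE
  rw [Finset.mem_union]
  by_cases hex : ∃ l, l ≤ n ∧ n^4 ≤ (Flev f l).card
  · obtain ⟨l, hl, hK⟩ := hex
    right
    rw [Finset.mem_biUnion]
    exact ⟨l, Finset.mem_range.2 (by omega), Finset.mem_filter.2 ⟨hfM, hmu, hK⟩⟩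
  · left
    push_neg at hex
    refine Finset.mem_filter.2 ⟨hfM, ?_⟩
    apply minT_card_le hmf (Nat.one_le_pow _ _ (by omega))
    intro l hl
    exact hex l hl

lemma Aset_bound (n : ℕ) (hn : 64 ≤ n) :
    ((Mset n).filter (fun f => (MinT f).card < (n+1)*n^4)).card * 2^n ≤ (Mset n).card := by
  set s := (n+1)*n^4 with hs
  have hs1 : 1 ≤ s := by
    have h14 : 1 ≤ n^4 := Nat.one_le_pow _ _ (by omega)
    calc 1 ≤ n^4 := h14
      _ ≤ (n+1)*n^4 := Nat.le_mul_of_pos_left _ (by omega)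
      _ = s := hs.symm
  have hA := Aset_card (n := n) s hs1
  have hnn : n + 1 ≤ n^2 := by nlinarith [show (2:ℕ) ≤ n by omega]
  have h1 : s ≤ n^6 := by
    calc s = (n+1) * n^4 := hs
      _ ≤ n^2 * n^4 := Nat.mul_le_mul_right _ hnn
      _ = n^6 := by ring
  have hns : n^6 + n*s + n ≤ n^8 := by
    have e1 : n*s = n^6 + n^5 := by rw [hs]; ring
    have e8 : n^8 = n^2 * n^6 := by ring
    have h4 : 4 ≤ n^2 := by nlinarith [show (2:ℕ) ≤ n by omega]
    have h46 : 4 * n^6 ≤ n^8 := by rw [e8]; exact Nat.mul_le_mul_right _ h4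
    have h56 : n^5 ≤ n^6 := Nat.pow_le_pow_right (by omega) (by omega)
    have h16 : n ≤ n^6 := by
      calc n = n^1 := (pow_one n).symm
        _ ≤ n^6 := Nat.pow_le_pow_right (by omega) (by omega)
    omega
  have hchain : s * (2^n)^s * 2^n ≤ 2^(n^8) := by
    calc s * (2^n)^s * 2^n ≤ 2^(n^6) * (2^n)^s * 2^n := by
          apply Nat.mul_le_mul_right
          apply Nat.mul_le_mul_right
          exact le_trans h1 (le_of_lt (Nat.lt_two_pow_self))
      _ = 2^(n^6 + n*s + n) := by rw [← pow_mul, ← pow_add, ← pow_add]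
      _ ≤ 2^(n^8) := Nat.pow_le_pow_right (by omega) hns
  have h8 : n^8 ≤ Nat.choose n (n/2) := by
    have h10 := pow10_le n hn
    have hc := two_pow_le_choose n
    have hnn : n + 1 ≤ n^2 := by nlinarith [show (2:ℕ) ≤ n by omega]
    have hx : (n+1) * n^8 ≤ n^10 := by
      calc (n+1) * n^8 ≤ n^2 * n^8 := Nat.mul_le_mul_right _ hnn
        _ = n^10 := by ring
    have hy : (n+1) * n^8 ≤ (n+1) * Nat.choose n (n/2) := le_trans hx (le_trans h10 hc)
    exact Nat.le_of_mul_le_mul_left hy (by omega)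
  calc ((Mset n).filter (fun f => (MinT f).card < (n+1)*n^4)).card * 2^n
      ≤ (s * (2^n)^s) * 2^n := Nat.mul_le_mul_right _ hA
    _ ≤ 2^(n^8) := hchain
    _ ≤ 2^(Nat.choose n (n/2)) := Nat.pow_le_pow_right (by omega) h8
    _ ≤ (Mset n).card := Mset_lower

lemma Bad_bound (n l : ℕ) :
    ((Mset n).filter (fun f => mu f = 0 ∧ n^4 ≤ (Flev f l).card)).card * n^2
      ≤ (Mset n).card := by
  have h := bad_global (n := n) l (n^4)
  have hsq : n^2 ≤ Nat.sqrt (n^4+1) := by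
    rw [Nat.le_sqrt]
    nlinarith
  calc ((Mset n).filter (fun f => mu f = 0 ∧ n^4 ≤ (Flev f l).card)).card * n^2
      ≤ ((Mset n).filter (fun f => mu f = 0 ∧ n^4 ≤ (Flev f l).card)).card
          * Nat.sqrt (n^4+1) := Nat.mul_le_mul_left _ hsq
    _ ≤ (Mset n).card := h

lemma ratio_bound (n : ℕ) (hn : 64 ≤ n) :
    (((Mset n).filter (fun f => ¬ Evasive f)).card : ℝ)
      ≤ ((Mset n).card : ℝ) * ((1/2)^n + 2/n) := by
  have hM : (0:ℝ) < ((Mset n).card : ℝ) := by exact_mod_cast Mset_pos (n := n)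
  have hn0 : (0:ℝ) < (n:ℝ) := by positivity
  have hcard : ((Mset n).filter (fun f => ¬ Evasive f)).card ≤
      ((Mset n).filter (fun f => (MinT f).card < (n+1)*n^4)).card +
      ∑ l ∈ Finset.range (n+1),
        ((Mset n).filter (fun f => mu f = 0 ∧ n^4 ≤ (Flev f l).card)).card := by
    calc ((Mset n).filter (fun f => ¬ Evasive f)).card
        ≤ (((Mset n).filter (fun f => (MinT f).card < (n+1)*n^4)) ∪
            (Finset.range (n+1)).biUnion
              (fun l => (Mset n).filter (fun f => mu f = 0 ∧ n^4 ≤ (Flev f l).card))).card :=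
          Finset.card_le_card (NE_subset n (by omega))
      _ ≤ ((Mset n).filter (fun f => (MinT f).card < (n+1)*n^4)).card +
            ((Finset.range (n+1)).biUnion
              (fun l => (Mset n).filter (fun f => mu f = 0 ∧ n^4 ≤ (Flev f l).card))).card :=
          Finset.card_union_le _ _
      _ ≤ _ := by
          apply Nat.add_le_add_left
          exact Finset.card_biUnion_le
  have hA : (((Mset n).filter (fun f => (MinT f).card < (n+1)*n^4)).card : ℝ)
      ≤ ((Mset n).card : ℝ) * (1/2)^n := by
    have h := Aset_bound n hn
    have hcast : (((Mset n).filter (fun f => (MinT f).card < (n+1)*n^4)).card : ℝ) * 2^n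
        ≤ ((Mset n).card : ℝ) := by exact_mod_cast h
    have h2 : (0:ℝ) < 2^n := by positivity
    have h3 : (((Mset n).filter (fun f => (MinT f).card < (n+1)*n^4)).card : ℝ)
        ≤ ((Mset n).card : ℝ) / 2^n := (le_div_iff₀ h2).2 hcast
    calc (((Mset n).filter (fun f => (MinT f).card < (n+1)*n^4)).card : ℝ)
        ≤ ((Mset n).card : ℝ) / 2^n := h3
      _ = ((Mset n).card : ℝ) * (1/2)^n := by rw [div_pow, one_pow]; ring
  have hB : ∀ l : ℕ, (((Mset n).filter (fun f => mu f = 0 ∧ n^4 ≤ (Flev f l).card)).card : ℝ)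
      ≤ ((Mset n).card : ℝ) / (n:ℝ)^2 := by
    intro l
    have h := Bad_bound n l
    have hcast : (((Mset n).filter (fun f => mu f = 0 ∧ n^4 ≤ (Flev f l).card)).card : ℝ) * (n:ℝ)^2
        ≤ ((Mset n).card : ℝ) := by exact_mod_cast h
    have h2 : (0:ℝ) < (n:ℝ)^2 := by positivity
    exact (le_div_iff₀ h2).2 hcast
  have hsum : ((∑ l ∈ Finset.range (n+1),
      ((Mset n).filter (fun f => mu f = 0 ∧ n^4 ≤ (Flev f l).card)).card : ℕ) : ℝ)
      ≤ ((n:ℝ)+1) * (((Mset n).card : ℝ) / (n:ℝ)^2) := by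
    push_cast
    calc ∑ l ∈ Finset.range (n+1),
        (((Mset n).filter (fun f => mu f = 0 ∧ n^4 ≤ (Flev f l).card)).card : ℝ)
        ≤ ∑ l ∈ Finset.range (n+1), ((Mset n).card : ℝ) / (n:ℝ)^2 :=
          Finset.sum_le_sum (fun l _ => hB l)
      _ = ((n:ℝ)+1) * (((Mset n).card : ℝ) / (n:ℝ)^2) := by
          rw [Finset.sum_const, Finset.card_range]
          push_cast
          ring
  have hfrac : ((n:ℝ)+1) * (((Mset n).card : ℝ) / (n:ℝ)^2) ≤ ((Mset n).card : ℝ) * (2/n) := by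
    rw [show ((n:ℝ)+1) * (((Mset n).card : ℝ) / (n:ℝ)^2)
        = ((Mset n).card : ℝ) * (((n:ℝ)+1) / (n:ℝ)^2) by ring]
    apply mul_le_mul_of_nonneg_left _ (le_of_lt hM)
    rw [div_le_div_iff₀ (by positivity) hn0]
    have hn1 : (1:ℝ) ≤ (n:ℝ) := by exact_mod_cast (show 1 ≤ n by omega)
    nlinarith [hn1, hn0]
  have hcastNE : (((Mset n).filter (fun f => ¬ Evasive f)).card : ℝ)
      ≤ (((Mset n).filter (fun f => (MinT f).card < (n+1)*n^4)).card : ℝ) +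
        ((∑ l ∈ Finset.range (n+1),
          ((Mset n).filter (fun f => mu f = 0 ∧ n^4 ≤ (Flev f l).card)).card : ℕ) : ℝ) := by
    exact_mod_cast hcard
  calc (((Mset n).filter (fun f => ¬ Evasive f)).card : ℝ)
      ≤ (((Mset n).filter (fun f => (MinT f).card < (n+1)*n^4)).card : ℝ) +
        ((∑ l ∈ Finset.range (n+1),
          ((Mset n).filter (fun f => mu f = 0 ∧ n^4 ≤ (Flev f l).card)).card : ℕ) : ℝ) := hcastNE
    _ ≤ ((Mset n).card : ℝ) * (1/2)^n + ((n:ℝ)+1) * (((Mset n).card : ℝ) / (n:ℝ)^2) :=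
        add_le_add hA hsum
    _ ≤ ((Mset n).card : ℝ) * (1/2)^n + ((Mset n).card : ℝ) * (2/n) :=
        add_le_add_right hfrac _
    _ = ((Mset n).card : ℝ) * ((1/2)^n + 2/n) := by ring

end Aux

/-- Almost all monotone Boolean functions are evasive: the proportion of
monotone functions `f : {0,1}^n → {0,1}` that are evasive tends to `1`. -/
theorem stmt19 :
    Filter.Tendsto (fun n : ℕ =>
      ((((Finset.univ : Finset ((Fin n → Bool) → Bool)).filter
          (fun f => Monotone f ∧ Evasive f)).card : ℝ) /
        (((Finset.univ : Finset ((Fin n → Bool) → Bool)).filter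
          (fun f => Monotone f)).card : ℝ)))
      Filter.atTop (nhds 1) := by
  classical
  have key : ∀ n : ℕ,
      ((((Finset.univ : Finset ((Fin n → Bool) → Bool)).filter
          (fun f => Monotone f ∧ Evasive f)).card : ℝ) /
        (((Finset.univ : Finset ((Fin n → Bool) → Bool)).filter
          (fun f => Monotone f)).card : ℝ))
      = 1 - ((((Aux.Mset n).filter (fun f => ¬ Evasive f)).card : ℝ)
              / ((Aux.Mset n).card : ℝ)) := by
    intro n
    have hM : (0:ℝ) < ((Aux.Mset n).card : ℝ) := by
      exact_mod_cast Aux.Mset_pos (n := n)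
    have e1 : (Finset.univ : Finset ((Fin n → Bool) → Bool)).filter
        (fun f => Monotone f ∧ Evasive f) = (Aux.Mset n).filter (fun f => Evasive f) := by
      rw [Aux.Mset, Finset.filter_filter]
    have e2 : ((Aux.Mset n).filter (fun f => Evasive f)).card
        + ((Aux.Mset n).filter (fun f => ¬ Evasive f)).card = (Aux.Mset n).card :=
      Finset.card_filter_add_card_filter_not _
    have e3 : (((Aux.Mset n).filter (fun f => Evasive f)).card : ℝ)
        = ((Aux.Mset n).card : ℝ)
          - (((Aux.Mset n).filter (fun f => ¬ Evasive f)).card : ℝ) := by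
      have := congrArg (fun k : ℕ => (k : ℝ)) e2
      push_cast at this
      linarith
    have e4 : ((Finset.univ : Finset ((Fin n → Bool) → Bool)).filter (fun f => Monotone f))
        = Aux.Mset n := rfl
    rw [e1, e3, e4]
    field_simp
  have h0 : Filter.Tendsto (fun n : ℕ =>
      (((Aux.Mset n).filter (fun f => ¬ Evasive f)).card : ℝ) / ((Aux.Mset n).card : ℝ))
      Filter.atTop (nhds 0) := by
    apply squeeze_zero' (g := fun n : ℕ => ((1:ℝ)/2)^n + 2/(n:ℝ))
    · filter_upwards with n
      positivity
    · filter_upwards [Filter.eventually_ge_atTop 64] with n hn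
      have hM : (0:ℝ) < ((Aux.Mset n).card : ℝ) := by
        exact_mod_cast Aux.Mset_pos (n := n)
      rw [div_le_iff₀ hM]
      calc (((Aux.Mset n).filter (fun f => ¬ Evasive f)).card : ℝ)
          ≤ ((Aux.Mset n).card : ℝ) * ((1/2)^n + 2/n) := Aux.ratio_bound n hn
        _ = ((1:ℝ)/2)^n * ((Aux.Mset n).card : ℝ)
              + 2/(n:ℝ) * ((Aux.Mset n).card : ℝ) := by ring
        _ = (((1:ℝ)/2)^n + 2/(n:ℝ)) * ((Aux.Mset n).card : ℝ) := by ring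
    · have t1 : Filter.Tendsto (fun n : ℕ => ((1:ℝ)/2)^n) Filter.atTop (nhds 0) :=
        tendsto_pow_atTop_nhds_zero_of_lt_one (by norm_num) (by norm_num)
      have t2 : Filter.Tendsto (fun n : ℕ => (2:ℝ)/(n:ℝ)) Filter.atTop (nhds 0) :=
        tendsto_const_div_atTop_nhds_zero_nat 2
      simpa using t1.add t2
  have h1 : Filter.Tendsto (fun n : ℕ =>
      1 - (((Aux.Mset n).filter (fun f => ¬ Evasive f)).card : ℝ) / ((Aux.Mset n).card : ℝ))
      Filter.atTop (nhds (1 - 0)) :=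
    Filter.Tendsto.sub tendsto_const_nhds h0
  rw [sub_zero] at h1
  exact h1.congr (fun n => (key n).symm)
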